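/- arXiv:1707.07507 — 2 statements merged into one kernel-verified Lean document; each statement's English description precedes it below -/
import Mathlib

section
/- Let D be a semilocal Prüfer domain, let Δ ⊆ SkOver(D) be such that SStar_Δ(D) ≠ ∅, and let γ_Δ : SStar_Δ(D) → ∏_{A∈Δ} FStar(A) be the map sending ⋆ to the family (⋆|_{Frac(A)})_{A∈Δ} of its restrictions. Then γ_Δ is injective. -/
/- Common background: Prüfer domains, semistar and (fractional) star operations,
standard decomposition, skeleton, supports, `hiSpec`, the rings `Z(P)`,
and the invariants `ω` and `ε`, following Spirito,
"Semistar operations on semilocal Prüfer domains". -/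

set_option linter.unusedSectionVars false
set_option maxHeartbeats 1000000

open Pointwise

noncomputable section

namespace Paper

variable (D : Type*) [CommRing D] [IsDomain D]
variable (K : Type*) [Field K] [Algebra D K] [IsFractionRing D K]

/-- The localization of `D` at a prime ideal `P`, viewed as an overring of `D`
inside its quotient field `K`. -/
def locAt (P : Ideal D) (hP : P.IsPrime) : Subalgebra D K :=
  Localization.subalgebra K (@Ideal.primeCompl D _ P hP)
    (fun _ hx => mem_nonZeroDivisors_of_ne_zero fun h => hx (h ▸ P.zero_mem))

/-- A Prüfer domain: every localization at a prime ideal is a valuation domain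
(any two elements are comparable w.r.t. divisibility). -/
def IsPrufer : Prop :=
  ∀ (P : Ideal D) (hP : P.IsPrime), ∀ x y : locAt D K P hP, ∃ z, x * z = y ∨ y * z = x

/-- A semilocal ring: finitely many maximal ideals. -/
def IsSemilocal : Prop := {I : Ideal D | I.IsMaximal}.Finite

/-- Two ideals are dependent if some nonzero prime ideal is contained in both. -/
def Dependent (M N : Ideal D) : Prop :=
  ∃ P : Ideal D, P.IsPrime ∧ P ≠ ⊥ ∧ P ≤ M ∧ P ≤ N

/-- The member of the standard decomposition corresponding to the dependence class
of the maximal ideal `M`: the intersection of the localizations of `D` at the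
maximal ideals dependent on `M`. -/
def TOf (M : Ideal D) : Subalgebra D K :=
  sInf {A | ∃ (N : Ideal D) (hN : N.IsMaximal), Dependent D M N ∧ A = locAt D K N hN.isPrime}

/-- The standard decomposition of `D`. -/
def stdDecomp : Set (Subalgebra D K) :=
  {T | ∃ M : Ideal D, M.IsMaximal ∧ T = TOf D K M}

/-- The skeleton of `Over(D)`: all intersections of subsets of the standard
decomposition (including the empty intersection `K` and the total one `D`). -/
def SkOver : Set (Subalgebra D K) :=
  {A | ∃ S ⊆ stdDecomp D K, A = sInf S}

/-- `I` is a fractional ideal of the overring `A` of `D`: it is an `A`-submodule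
of `K` and `dI ⊆ A` for some nonzero `d ∈ K`. -/
def IsFracOf (A : Subalgebra D K) (I : Submodule D K) : Prop :=
  (∀ a ∈ A, ∀ x ∈ I, a * x ∈ I) ∧ ∃ d : K, d ≠ 0 ∧ ∀ x ∈ I, d * x ∈ A

end Paper

namespace Paper

/-- A semistar operation on a domain `R` with quotient field `K`: an extensive,
order-preserving, idempotent self-map of the set of `R`-submodules of `K` such
that `(xI)^⋆ = x·I^⋆` for every nonzero `x ∈ K`. -/
structure Semistar (R : Type*) [CommRing R] (K : Type*) [Field K] [Algebra R K] where
  toFun : Submodule R K → Submodule R K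
  le_star' : ∀ I, I ≤ toFun I
  mono' : ∀ ⦃I J⦄, I ≤ J → toFun I ≤ toFun J
  idem' : ∀ I, toFun (toFun I) = toFun I
  smul' : ∀ (x : K), x ≠ 0 → ∀ I,
    toFun (Submodule.span R {x} * I) = Submodule.span R {x} * toFun I

namespace Semistar

variable {R : Type*} [CommRing R] {K : Type*} [Field K] [Algebra R K]

theorem ext' {s t : Semistar R K} (h : s.toFun = t.toFun) : s = t := by
  cases s; cases t; cases h; rfl

instance : PartialOrder (Semistar R K) where
  le s t := ∀ I, s.toFun I ≤ t.toFun I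
  le_refl _ _ := le_rfl
  le_trans _ _ _ hab hbc I := (hab I).trans (hbc I)
  le_antisymm _ _ h h' := ext' (funext fun I => le_antisymm (h I) (h' I))

end Semistar

/-- The identity semistar operation `d`. -/
def dOp (R : Type*) [CommRing R] (K : Type*) [Field K] [Algebra R K] : Semistar R K where
  toFun I := I
  le_star' _ := le_rfl
  mono' _ _ h := h
  idem' _ := rfl
  smul' _ _ _ := rfl

end Paper

namespace Paper

variable (D : Type*) [CommRing D] [IsDomain D]
variable (K : Type*) [Field K] [Algebra D K] [IsFractionRing D K]

/-- A fractional star operation on an overring `A` of `D` (inside `K`): a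
semistar-like closure operation defined on the fractional ideals of `A`.
In particular `FracStar D K ⊥` is the set of fractional star operations on `D`. -/
structure FracStar (A : Subalgebra D K) where
  toFun : {I : Submodule D K // IsFracOf D K A I} → {I : Submodule D K // IsFracOf D K A I}
  le_star' : ∀ I, I.1 ≤ (toFun I).1
  mono' : ∀ I J, I.1 ≤ J.1 → (toFun I).1 ≤ (toFun J).1
  idem' : ∀ I, toFun (toFun I) = toFun I
  smul' : ∀ (x : K), x ≠ 0 → ∀ I J, J.1 = Submodule.span D {x} * I.1 →
    (toFun J).1 = Submodule.span D {x} * (toFun I).1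

namespace FracStar

variable {D K} {A : Subalgebra D K}

theorem ext' {s t : FracStar D K A} (h : s.toFun = t.toFun) : s = t := by
  cases s; cases t; cases h; rfl

instance : PartialOrder (FracStar D K A) where
  le s t := ∀ I, (s.toFun I).1 ≤ (t.toFun I).1
  le_refl _ _ := le_rfl
  le_trans _ _ _ hab hbc I := (hab I).trans (hbc I)
  le_antisymm _ _ h h' := ext' (funext fun I => Subtype.ext (le_antisymm (h I) (h' I)))

end FracStar

/-- A fractional star operation on the overring `A` is a *star operation* if it
closes `A` itself. -/
def FracStar.IsStarOp {A : Subalgebra D K} (f : FracStar D K A) : Prop :=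
  ∀ h : IsFracOf D K A (Subalgebra.toSubmodule A),
    (f.toFun ⟨Subalgebra.toSubmodule A, h⟩).1 = Subalgebra.toSubmodule A

/-- The support of a semistar operation on `D`: the elements `A` of the skeleton
such that `A^⋆` is a fractional ideal of `A`. -/
def supp (s : Semistar D K) : Set (Subalgebra D K) :=
  {A | A ∈ SkOver D K ∧ IsFracOf D K A (s.toFun (Subalgebra.toSubmodule A))}

/-- The image of an ideal of `D` inside `K`. -/
def idealToK (P : Ideal D) : Submodule D K := Submodule.map (Algebra.linearMap D K) P

end Paper

namespace Paper

/-- An abstract fractional star operation on a commutative ring `A`, acting on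
the fractional ideals of `A` inside its fraction ring. -/
structure AFracStar (A : Type*) [CommRing A] where
  toFun : FractionalIdeal (nonZeroDivisors A) (FractionRing A) →
    FractionalIdeal (nonZeroDivisors A) (FractionRing A)
  le_star' : ∀ I, I ≤ toFun I
  mono' : ∀ ⦃I J⦄, I ≤ J → toFun I ≤ toFun J
  idem' : ∀ I, toFun (toFun I) = toFun I
  smul' : ∀ (x : FractionRing A), x ≠ 0 → ∀ I,
    toFun (FractionalIdeal.spanSingleton (nonZeroDivisors A) x * I) =
      FractionalIdeal.spanSingleton (nonZeroDivisors A) x * toFun I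

namespace AFracStar

variable {A : Type*} [CommRing A]

theorem ext' {s t : AFracStar A} (h : s.toFun = t.toFun) : s = t := by
  cases s; cases t; cases h; rfl

instance : PartialOrder (AFracStar A) where
  le s t := ∀ I, s.toFun I ≤ t.toFun I
  le_refl _ _ := le_rfl
  le_trans _ _ _ hab hbc I := (hab I).trans (hbc I)
  le_antisymm _ _ h h' := ext' (funext fun I => le_antisymm (h I) (h' I))

end AFracStar

/-- Abstract star operations on `A`: fractional star operations closing `A`. -/
def AStar (A : Type*) [CommRing A] : Type _ := {s : AFracStar A // s.toFun 1 = 1}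

instance (A : Type*) [CommRing A] : PartialOrder (AStar A) :=
  inferInstanceAs (PartialOrder {s : AFracStar A // s.toFun 1 = 1})

end Paper

namespace Paper

variable (D : Type*) [CommRing D] [IsDomain D]

/-- `P` is a branching point of `Spec(D)`: the infimum (among the primes) of a
family of pairwise incomparable primes not containing `P`. -/
def IsBranchPoint (P : Ideal D) : Prop :=
  ∃ S : Set (Ideal D), (∀ Q ∈ S, Q.IsPrime) ∧
    (S.Pairwise fun Q₁ Q₂ => ¬Q₁ ≤ Q₂ ∧ ¬Q₂ ≤ Q₁) ∧ P ∉ S ∧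
    (∀ Q ∈ S, P ≤ Q) ∧ ∀ P' : Ideal D, P'.IsPrime → (∀ Q ∈ S, P' ≤ Q) → P' ≤ P

/-- The homeomorphically irreducible tree underlying `Spec(D)`: the zero ideal,
the maximal ideals and the branching points, ordered by inclusion. -/
def hiSpec : Set (Ideal D) :=
  {P | P.IsPrime ∧ (P = ⊥ ∨ P.IsMaximal ∨ IsBranchPoint D P)}

/-- `Q` is the element of `hiSpec D` directly below `P`. -/
def DirectlyBelow (Q P : Ideal D) : Prop :=
  Q ∈ hiSpec D ∧ P ∈ hiSpec D ∧ Q < P ∧ ∀ R ∈ hiSpec D, Q < R → ¬R < P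

/-- The localization of `D` at the prime ideal `P`, as an abstract ring. -/
abbrev locRing (P : Ideal D) (hP : P.IsPrime) : Type _ :=
  Localization (@Ideal.primeCompl D _ P hP)

/-- The valuation ring `Z(P) = D_P / Q·D_P`. -/
abbrev Zring (P Q : Ideal D) (hP : P.IsPrime) : Type _ :=
  locRing D P hP ⧸ Ideal.map (algebraMap D (locRing D P hP)) Q

/-- `ω(P) = |FStar(Z(P))|`, where `Q` is the element of `hiSpec D` directly
below `P`. -/
def omegaAt (P Q : Ideal D) (hP : P.IsPrime) : ℕ :=
  Nat.card (AFracStar (Zring D P Q hP))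

open Classical in
/-- `ε(P) = |Star(D_P)| ∈ {1,2}` for a (nonzero) prime `P`. -/
def epsilonOf (A : Ideal D) : ℕ :=
  if h : A.IsPrime then Nat.card (AStar (locRing D A h)) else 0

end Paper

namespace Paper

theorem mem_hiSpec_prime {D : Type*} [CommRing D] [IsDomain D] {P : Ideal D}
    (h : P ∈ hiSpec D) : P.IsPrime := h.1

theorem maximal_mem_hiSpec {D : Type*} [CommRing D] [IsDomain D] {M : Ideal D}
    (h : M.IsMaximal) : M ∈ hiSpec D := ⟨h.isPrime, Or.inr (Or.inl h)⟩

end Paper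

namespace Paper

section KeyLemmas

variable {D : Type*} [CommRing D] [IsDomain D]
variable {K : Type*} [Field K] [Algebra D K] [IsFractionRing D K]

private lemma mem_locAt {P : Ideal D} {hP : P.IsPrime} {x : K} :
    x ∈ locAt D K P hP ↔
      ∃ a s : D, s ∉ P ∧ x = algebraMap D K a / algebraMap D K s := by
  show x ∈ Localization.subalgebra K P.primeCompl _ ↔ _
  rw [Localization.subalgebra, ← SetLike.mem_coe, Subalgebra.coe_copy]
  constructor
  · rintro ⟨a, s, hs, rfl⟩
    exact ⟨a, s, hs, by rw [IsFractionRing.mk'_eq_div]⟩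
  · rintro ⟨a, s, hs, rfl⟩
    exact ⟨a, s, hs, by rw [IsFractionRing.mk'_eq_div]⟩

private lemma algMap_ne_zero {a : D} (ha : a ≠ 0) : algebraMap D K a ≠ 0 :=
  fun h => ha (IsFractionRing.injective D K (h.trans (map_zero _).symm))

/-- `D_P ≠ K` witnessed by `p⁻¹ ∉ D_P` for `0 ≠ p ∈ P`. -/
private lemma inv_not_mem_locAt {P : Ideal D} (hP : P.IsPrime) {p : D}
    (hp : p ∈ P) (hp0 : p ≠ 0) :
    (algebraMap D K p)⁻¹ ∉ locAt D K P hP := by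
  intro hmem
  obtain ⟨a, t, ht, heq⟩ := mem_locAt.1 hmem
  have ht0 : t ≠ 0 := fun h => ht (h ▸ P.zero_mem)
  have hpK : algebraMap D K p ≠ 0 := algMap_ne_zero hp0
  have htK : algebraMap D K t ≠ 0 := algMap_ne_zero ht0
  have : algebraMap D K t = algebraMap D K (a * p) := by
    rw [map_mul]
    field_simp at heq
    linear_combination heq
  exact ht ((IsFractionRing.injective D K this) ▸ P.mul_mem_left a hp)

private lemma locAt_mono {P Q : Ideal D} (hP : P.IsPrime) (hQ : Q.IsPrime) (h : P ≤ Q) :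
    locAt D K Q hQ ≤ locAt D K P hP := by
  intro x hx
  obtain ⟨a, t, ht, rfl⟩ := mem_locAt.1 hx
  exact mem_locAt.2 ⟨a, t, fun htP => ht (h htP), rfl⟩

private lemma locAt_bot (h : (⊥ : Ideal D).IsPrime) : locAt D K ⊥ h = ⊤ := by
  rw [eq_top_iff]
  intro x _
  obtain ⟨a, b, hb, rfl⟩ := IsFractionRing.div_surjective (A := D) x
  exact mem_locAt.2 ⟨a, b, by simpa [Ideal.mem_bot] using nonZeroDivisors.ne_zero hb, rfl⟩

private lemma mul_top_of_ne_bot {J : Submodule D K} (hJ : J ≠ ⊥) :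
    J * (⊤ : Submodule D K) = ⊤ := by
  obtain ⟨j, hjJ, hj0⟩ := Submodule.ne_bot_iff J |>.1 hJ
  rw [eq_top_iff]
  rintro x -
  have hx : x = j * (j⁻¹ * x) := by field_simp
  rw [hx]
  exact Submodule.mul_mem_mul hjJ Submodule.mem_top

/-- Multiplication by an element of `A` preserves `J * A`. -/
private lemma mul_stable {A : Subalgebra D K} {J : Submodule D K} {v x : K}
    (hv : v ∈ A) (hx : x ∈ J * Subalgebra.toSubmodule A) :
    v * x ∈ J * Subalgebra.toSubmodule A := by
  have h : (J * Subalgebra.toSubmodule A) * Subalgebra.toSubmodule A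
      = J * Subalgebra.toSubmodule A := by
    rw [mul_assoc, Subalgebra.isIdempotentElem_toSubmodule]
  rw [← h, mul_comm v x]
  exact Submodule.mul_mem_mul hx hv

private lemma le_mul_subalgebra (J : Submodule D K) (A : Subalgebra D K) :
    J ≤ J * Subalgebra.toSubmodule A := by
  intro x hx
  have := Submodule.mul_mem_mul hx (show (1:K) ∈ Subalgebra.toSubmodule A from A.one_mem)
  rwa [mul_one] at this

/-- Valuation dichotomy for `D_P`, from the Prüfer hypothesis. -/
private lemma loc_dichotomy (hPruf : IsPrufer D K) {P : Ideal D} (hP : P.IsPrime)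
    {x : K} (hx : x ≠ 0) : x ∈ locAt D K P hP ∨ x⁻¹ ∈ locAt D K P hP := by
  obtain ⟨a, b, hb, rfl⟩ := IsFractionRing.div_surjective (A := D) x
  have hbK : algebraMap D K b ≠ 0 :=
    algMap_ne_zero (nonZeroDivisors.ne_zero hb)
  have haK : algebraMap D K a ≠ 0 := by
    intro h; exact hx (by rw [h, zero_div])
  obtain ⟨z, hz⟩ := hPruf P hP
    ⟨algebraMap D K a, Subalgebra.algebraMap_mem _ a⟩
    ⟨algebraMap D K b, Subalgebra.algebraMap_mem _ b⟩
  rcases hz with h | h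
  · right
    have h' : algebraMap D K a * (z : K) = algebraMap D K b := congrArg Subtype.val h
    have : (algebraMap D K a / algebraMap D K b)⁻¹ = (z : K) := by
      rw [inv_div, ← h', mul_comm, mul_div_assoc, div_self haK, mul_one]
    rw [this]; exact z.2
  · left
    have h' : algebraMap D K b * (z : K) = algebraMap D K a := congrArg Subtype.val h
    have : algebraMap D K a / algebraMap D K b = (z : K) := by
      rw [← h', mul_comm, mul_div_assoc, div_self hbK, mul_one]
    rw [this]; exact z.2

/-- A proper `D_P`-stable submodule of `K` is bounded by a nonzero element of `D`. -/
private lemma exists_bound (hPruf : IsPrufer D K) {P : Ideal D} (hP : P.IsPrime)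
    {W : Submodule D K}
    (hst : ∀ v ∈ locAt D K P hP, ∀ x ∈ W, v * x ∈ W) (hW : W ≠ ⊤) :
    ∃ d : D, d ≠ 0 ∧ ∀ x ∈ W, algebraMap D K d * x ∈ locAt D K P hP := by
  obtain ⟨y, hy⟩ : ∃ y : K, y ∉ W := by
    by_contra hcon; push_neg at hcon
    exact hW (Submodule.eq_top_iff'.2 hcon)
  have hy0 : y ≠ 0 := fun h => hy (h ▸ W.zero_mem)
  obtain ⟨a, b, hb, hy'⟩ := IsFractionRing.div_surjective (A := D) y
  have hbne : b ≠ 0 := nonZeroDivisors.ne_zero hb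
  have hbK : algebraMap D K b ≠ 0 := algMap_ne_zero hbne
  have haK : algebraMap D K a ≠ 0 := by
    intro hcon; rw [← hy', hcon, zero_div] at hy0; exact hy0 rfl
  refine ⟨b, hbne, fun x hx => ?_⟩
  rcases eq_or_ne x 0 with rfl | hx0
  · rw [mul_zero]; exact (locAt D K P hP).zero_mem
  have ht0 : x⁻¹ * y ≠ 0 := mul_ne_zero (inv_ne_zero hx0) hy0
  have hk : y⁻¹ * x ∈ locAt D K P hP := by
    rcases loc_dichotomy hPruf hP ht0 with hmem | hmem
    · exfalso
      apply hy
      have : (x⁻¹ * y) * x = y := by field_simp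
      rw [← this]
      exact hst _ hmem x hx
    · rwa [mul_inv_rev, inv_inv] at hmem
  have hkey : algebraMap D K b * x = algebraMap D K a * (y⁻¹ * x) := by
    rw [← hy']; field_simp
  rw [hkey]
  exact mul_mem (Subalgebra.algebraMap_mem _ a) hk

/-- An element of `J · D_M` has a denominator outside `M`. -/
private lemma exists_denom {M : Ideal D} (hM : M.IsPrime) {J : Submodule D K} {x : K}
    (hx : x ∈ J * Subalgebra.toSubmodule (locAt D K M hM)) :
    ∃ t : D, t ∉ M ∧ algebraMap D K t * x ∈ J := by
  refine Submodule.mul_induction_on hx ?_ ?_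
  · intro j hj v hv
    obtain ⟨a, t, ht, rfl⟩ := mem_locAt.1 hv
    have ht0 : t ≠ 0 := fun hcon => ht (hcon ▸ M.zero_mem)
    have htK : algebraMap D K t ≠ 0 := algMap_ne_zero ht0
    refine ⟨t, ht, ?_⟩
    have hkey : algebraMap D K t * (j * (algebraMap D K a / algebraMap D K t))
        = algebraMap D K a * j := by field_simp
    rw [hkey, ← Algebra.smul_def]
    exact J.smul_mem a hj
  · rintro x y ⟨t, ht, htx⟩ ⟨u, hu, huy⟩
    refine ⟨t * u, fun hmem => (hM.mem_or_mem hmem).elim ht hu, ?_⟩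
    rw [map_mul, mul_add]
    apply J.add_mem
    · have : algebraMap D K t * algebraMap D K u * x
          = algebraMap D K u * (algebraMap D K t * x) := by ring
      rw [this, ← Algebra.smul_def]
      exact J.smul_mem u htx
    · rw [mul_assoc, ← Algebra.smul_def]
      exact J.smul_mem t huy

/-- Local–global: an element lying in `J · D_M` for every maximal `M` lies in `J`. -/
private lemma mem_of_forall_loc {J : Submodule D K} {x : K}
    (hx : ∀ (M : Ideal D) (hM : M.IsMaximal),
      x ∈ J * Subalgebra.toSubmodule (locAt D K M hM.isPrime)) : x ∈ J := by
  set I : Ideal D := Submodule.comap (LinearMap.toSpanSingleton D K x) J with hI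
  have hIT : I = ⊤ := by
    by_contra hne
    obtain ⟨M, hM, hle⟩ := Ideal.exists_le_maximal I hne
    obtain ⟨t, ht, htx⟩ := exists_denom hM.isPrime (hx M hM)
    apply ht
    apply hle
    show t • x ∈ J
    rwa [Algebra.smul_def]
  have h1 : (1 : D) ∈ I := hIT ▸ Submodule.mem_top
  have := h1
  rw [hI, Submodule.mem_comap, LinearMap.toSpanSingleton_apply, one_smul] at this
  exact this

private lemma top_mem_supp (s : Semistar D K) : (⊤ : Subalgebra D K) ∈ supp D K s := by
  refine ⟨⟨∅, Set.empty_subset _, sInf_empty.symm⟩, ?_, 1, one_ne_zero, fun x _ => trivial⟩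
  intro a _ x _
  have htop : s.toFun (Subalgebra.toSubmodule (⊤ : Subalgebra D K)) = ⊤ := by
    rw [Algebra.top_toSubmodule]
    exact le_antisymm le_top (s.le_star' ⊤)
  rw [htop]
  trivial

/-- Key lemma: every `s`-closed submodule of `K` is a fractional ideal of some
member of the support of `s`. -/
private lemma closed_isFrac (hPruf : IsPrufer D K) (hsl : IsSemilocal D)
    (s : Semistar D K) (J : Submodule D K) (hJcl : s.toFun J = J) :
    ∃ A ∈ supp D K s, IsFracOf D K A J := by
  classical
  rcases eq_or_ne J ⊥ with rfl | hJbot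
  · refine ⟨⊤, top_mem_supp s, fun a _ x hx => ?_, 1, one_ne_zero, fun x _ => trivial⟩
    simp only [Submodule.mem_bot] at hx ⊢
    rw [hx, mul_zero]
  rcases eq_or_ne J ⊤ with rfl | hJtop
  · exact ⟨⊤, top_mem_supp s, fun a _ x _ => trivial, 1, one_ne_zero, fun x _ => trivial⟩
  set Λ : Set (Ideal D) :=
    {M | ∃ hM : M.IsMaximal,
      J * Subalgebra.toSubmodule (locAt D K M hM.isPrime) ≠ ⊤} with hΛdef
  have hΛmax : ∀ M ∈ Λ, M.IsMaximal := fun M hM => hM.choose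
  have hΛne_bot : ∀ M ∈ Λ, M ≠ ⊥ := by
    rintro M ⟨hM, hne⟩ rfl
    apply hne
    rw [locAt_bot hM.isPrime, Algebra.top_toSubmodule]
    exact mul_top_of_ne_bot hJbot
  -- boundedness on each member of Λ
  have hboundJ : ∀ (M : Ideal D) (hM : M.IsPrime),
      J * Subalgebra.toSubmodule (locAt D K M hM) ≠ ⊤ →
      ∃ d : D, d ≠ 0 ∧ ∀ x ∈ J, algebraMap D K d * x ∈ locAt D K M hM := by
    intro M hM hne
    obtain ⟨d, hd0, hd⟩ := exists_bound hPruf hM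
      (fun v hv x hx => mul_stable hv hx) hne
    exact ⟨d, hd0, fun x hx => hd x (le_mul_subalgebra J _ hx)⟩
  -- dependence propagation
  have hdep : ∀ M ∈ Λ, ∀ (N : Ideal D) (hN : N.IsMaximal), Dependent D M N → N ∈ Λ := by
    rintro M hMΛ N hN ⟨P, hP, hPbot, hPM, hPN⟩
    obtain ⟨hM, hMne⟩ := hMΛ
    obtain ⟨d, hd0, hd⟩ := hboundJ M hM.isPrime hMne
    refine ⟨hN, fun htopEq => ?_⟩
    have hleMP : locAt D K M hM.isPrime ≤ locAt D K P hP := locAt_mono hP hM.isPrime hPM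
    have hleNP : locAt D K N hN.isPrime ≤ locAt D K P hP := locAt_mono hP hN.isPrime hPN
    have hle : J * Subalgebra.toSubmodule (locAt D K N hN.isPrime) ≤
        Submodule.comap (LinearMap.mulLeft D (algebraMap D K d))
          (Subalgebra.toSubmodule (locAt D K P hP)) := by
      refine Submodule.mul_le.2 (fun j hj v hv => ?_)
      show algebraMap D K d * (j * v) ∈ locAt D K P hP
      rw [← mul_assoc]
      exact mul_mem (hleMP (hd j hj)) (hleNP hv)
    rw [htopEq] at hle
    obtain ⟨p, hpP, hp0⟩ := Submodule.ne_bot_iff P |>.1 hPbot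
    have hdK : algebraMap D K d ≠ 0 := algMap_ne_zero hd0
    have hmem : algebraMap D K d * ((algebraMap D K d)⁻¹ * (algebraMap D K p)⁻¹)
        ∈ locAt D K P hP := hle Submodule.mem_top
    rw [← mul_assoc, mul_inv_cancel₀ hdK, one_mul] at hmem
    exact inv_not_mem_locAt hP hpP hp0 hmem
  -- a uniform denominator
  have hΛfin : Λ.Finite := hsl.subset hΛmax
  have hchoice : ∀ M : Ideal D, ∃ d : D, d ≠ 0 ∧
      ∀ (hM : M.IsPrime), M ∈ Λ → ∀ x ∈ J, algebraMap D K d * x ∈ locAt D K M hM := by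
    intro M
    by_cases hMΛ : M ∈ Λ
    · obtain ⟨hM, hMne⟩ := hMΛ
      obtain ⟨d, hd0, hd⟩ := hboundJ M hM.isPrime hMne
      exact ⟨d, hd0, fun hP _ x hx => hd x hx⟩
    · exact ⟨1, one_ne_zero, fun _ hcon => absurd hcon hMΛ⟩
  choose dfun hd0 hdd using hchoice
  set F : Finset (Ideal D) := hΛfin.toFinset with hF
  set d : D := ∏ M ∈ F, dfun M with hdp
  have hdne : d ≠ 0 := Finset.prod_ne_zero_iff.2 (fun M _ => hd0 M)
  have hdKne : algebraMap D K d ≠ 0 := algMap_ne_zero hdne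
  have hdJ : ∀ M ∈ Λ, ∀ (hM : M.IsPrime), ∀ x ∈ J,
      algebraMap D K d * x ∈ locAt D K M hM := by
    intro M hMΛ hM x hx
    have hMF : M ∈ F := hΛfin.mem_toFinset.2 hMΛ
    have hsplit : algebraMap D K d * x
        = algebraMap D K (∏ N ∈ F.erase M, dfun N) * (algebraMap D K (dfun M) * x) := by
      rw [hdp, ← Finset.mul_prod_erase F dfun hMF, map_mul]; ring
    rw [hsplit]
    exact mul_mem (Subalgebra.algebraMap_mem _ _) (hdd M hM hMΛ x hx)
  -- the skeleton element
  set 𝒮 : Set (Subalgebra D K) := {B | ∃ M ∈ Λ, B = TOf D K M} with h𝒮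
  set A : Subalgebra D K := sInf 𝒮 with hA
  have hASk : A ∈ SkOver D K := by
    refine ⟨𝒮, ?_, rfl⟩
    rintro B ⟨M, hMΛ, rfl⟩
    exact ⟨M, hΛmax M hMΛ, rfl⟩
  have hdepself : ∀ M ∈ Λ, Dependent D M M := fun M hMΛ =>
    ⟨M, (hΛmax M hMΛ).isPrime, hΛne_bot M hMΛ, le_rfl, le_rfl⟩
  have hAle : ∀ M ∈ Λ, ∀ (N : Ideal D) (hN : N.IsMaximal), Dependent D M N →
      A ≤ locAt D K N hN.isPrime := by
    intro M hMΛ N hN hdepMN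
    have h1 : A ≤ TOf D K M := sInf_le ⟨M, hMΛ, rfl⟩
    have h2 : TOf D K M ≤ locAt D K N hN.isPrime := sInf_le ⟨N, hN, hdepMN, rfl⟩
    exact h1.trans h2
  -- J is a fractional ideal of A
  have hdA : ∀ x ∈ J, algebraMap D K d * x ∈ A := by
    intro x hx
    rw [hA, Algebra.mem_sInf]
    rintro B ⟨M, hMΛ, rfl⟩
    rw [TOf, Algebra.mem_sInf]
    rintro C ⟨N, hN, hdepMN, rfl⟩
    exact hdJ N (hdep M hMΛ N hN hdepMN) hN.isPrime x hx
  have hmodJ : ∀ a ∈ A, ∀ x ∈ J, a * x ∈ J := by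
    intro a ha x hx
    apply mem_of_forall_loc (J := J)
    intro M hM
    by_cases hMΛ : M ∈ Λ
    · have haM : a ∈ locAt D K M hM.isPrime :=
        hAle M hMΛ M hM (hdepself M hMΛ) ha
      exact mul_stable haM (le_mul_subalgebra J _ hx)
    · have hT : J * Subalgebra.toSubmodule (locAt D K M hM.isPrime) = ⊤ := by
        by_contra hne; exact hMΛ ⟨hM, hne⟩
      rw [hT]; trivial
  -- A is in the support of s
  obtain ⟨j, hjJ, hj0⟩ := Submodule.ne_bot_iff J |>.1 hJbot
  have hspan : Submodule.span D {j} * Subalgebra.toSubmodule A ≤ J := by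
    refine Submodule.mul_le.2 (fun m hm a ha => ?_)
    obtain ⟨c, rfl⟩ := Submodule.mem_span_singleton.1 hm
    rw [smul_mul_assoc]
    exact J.smul_mem c (by rw [mul_comm]; exact hmodJ a ha j hjJ)
  have hstar : Submodule.span D {j} * s.toFun (Subalgebra.toSubmodule A) ≤ J := by
    rw [← s.smul' j hj0]
    calc s.toFun (Submodule.span D {j} * Subalgebra.toSubmodule A)
        ≤ s.toFun J := s.mono' hspan
      _ = J := hJcl
  have hmodSA : ∀ a ∈ A, ∀ x ∈ s.toFun (Subalgebra.toSubmodule A),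
      a * x ∈ s.toFun (Subalgebra.toSubmodule A) := by
    intro a ha x hx
    rcases eq_or_ne a 0 with rfl | ha0
    · rw [zero_mul]; exact (s.toFun _).zero_mem
    have hle1 : Submodule.span D {a} * Subalgebra.toSubmodule A
        ≤ Subalgebra.toSubmodule A := by
      refine Submodule.mul_le.2 (fun m hm b hb => ?_)
      obtain ⟨c, rfl⟩ := Submodule.mem_span_singleton.1 hm
      rw [smul_mul_assoc]
      exact (Subalgebra.toSubmodule A).smul_mem c (A.mul_mem ha hb)
    have hmono := s.mono' hle1
    rw [s.smul' a ha0] at hmono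
    exact hmono (Submodule.mul_mem_mul (Submodule.mem_span_singleton_self a) hx)
  have hboundSA : ∀ x ∈ s.toFun (Subalgebra.toSubmodule A),
      (algebraMap D K d * j) * x ∈ A := by
    intro x hx
    have hjx : j * x ∈ J :=
      hstar (Submodule.mul_mem_mul (Submodule.mem_span_singleton_self j) hx)
    have := hdA (j * x) hjx
    rwa [mul_assoc]
  exact ⟨A, ⟨hASk, hmodSA, algebraMap D K d * j, mul_ne_zero hdKne hj0, hboundSA⟩,
    hmodJ, algebraMap D K d, hdKne, hdA⟩

end KeyLemmas

end Paper

namespace Paper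

/-- The map `γ_Δ`, sending a semistar operation with support `Δ` to
the family of its restrictions to the fractional ideals of the members of `Δ`,
is injective. -/
theorem statement2
    (D : Type*) [CommRing D] [IsDomain D]
    (K : Type*) [Field K] [Algebra D K] [IsFractionRing D K]
    (hPruf : IsPrufer D K) (hsl : IsSemilocal D)
    (Δ : Set (Subalgebra D K))
    (s₁ s₂ : Semistar D K) (h₁ : supp D K s₁ = Δ) (h₂ : supp D K s₂ = Δ)
    (h : ∀ A ∈ Δ, ∀ I : Submodule D K, IsFracOf D K A I → s₁.toFun I = s₂.toFun I) :
    s₁ = s₂ := by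
  have key : ∀ t u : Semistar D K, supp D K t = Δ →
      (∀ A ∈ Δ, ∀ I : Submodule D K, IsFracOf D K A I → t.toFun I = u.toFun I) →
      ∀ I : Submodule D K, u.toFun I ≤ t.toFun I := by
    intro t u ht hagree I
    obtain ⟨A, hA, hfrac⟩ := closed_isFrac hPruf hsl t (t.toFun I) (t.idem' I)
    have hAΔ : A ∈ Δ := ht ▸ hA
    have heq : t.toFun (t.toFun I) = u.toFun (t.toFun I) := hagree A hAΔ _ hfrac
    calc u.toFun I ≤ u.toFun (t.toFun I) := u.mono' (t.le_star' I)
      _ = t.toFun (t.toFun I) := heq.symm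
      _ = t.toFun I := t.idem' I
  apply Semistar.ext'
  funext I
  apply le_antisymm
  · exact key s₂ s₁ h₂ (fun A hA I hI => (h A hA I hI).symm) I
  · exact key s₁ s₂ h₁ h I


end Paper
end
end

section
/- Let D be a semilocal Prüfer domain with quotient field K and let Δ ⊆ SkOver(D). Then Δ = supp(⋆) for some semistar operation ⋆ on D if and only if K ∈ Δ and Δ is closed under intersections. -/
/- Common background: Prüfer domains, semistar and (fractional) star operations,
standard decomposition, skeleton, supports, `hiSpec`, the rings `Z(P)`,
and the invariants `ω` and `ε`, following Spirito,
"Semistar operations on semilocal Prüfer domains". -/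

set_option linter.unusedSectionVars false
set_option maxHeartbeats 1000000

open Pointwise

noncomputable section

namespace Paper

section Auxiliary

open Submodule

variable {D : Type*} [CommRing D] [IsDomain D]
variable {K : Type*} [Field K] [Algebra D K] [IsFractionRing D K]

lemma aM_inj : Function.Injective (algebraMap D K) := IsFractionRing.injective D K

lemma aM_ne_zero {s : D} (hs : s ≠ 0) : algebraMap D K s ≠ 0 := by
  simpa using fun h => hs (aM_inj (K := K) (by rw [h, map_zero]))

lemma mem_locAt_iff {P : Ideal D} (hP : P.IsPrime) {k : K} :
    k ∈ locAt D K P hP ↔ ∃ a s : D, s ∉ P ∧ algebraMap D K s * k = algebraMap D K a := by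
  constructor
  · rintro ⟨a, s, hs, rfl⟩
    refine ⟨a, s, hs, ?_⟩
    have hs0 : algebraMap D K s ≠ 0 := aM_ne_zero (fun h => hs (h ▸ P.zero_mem))
    rw [IsFractionRing.mk'_eq_div]
    field_simp
  · rintro ⟨a, s, hs, h⟩
    have hs0 : algebraMap D K s ≠ 0 := aM_ne_zero (fun h => hs (h ▸ P.zero_mem))
    refine ⟨a, s, hs, ?_⟩
    rw [IsFractionRing.mk'_eq_div, eq_div_iff hs0, mul_comm]
    exact h

lemma inv_mem_locAt {P : Ideal D} (hP : P.IsPrime) {s : D} (hs : s ∉ P) :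
    (algebraMap D K s)⁻¹ ∈ locAt D K P hP := by
  have hs0 : algebraMap D K s ≠ 0 := aM_ne_zero (fun h => hs (h ▸ P.zero_mem))
  exact (mem_locAt_iff hP).mpr ⟨1, s, hs, by rw [mul_inv_cancel₀ hs0, map_one]⟩

lemma locAt_dichotomy (hPruf : IsPrufer D K) {P : Ideal D} (hP : P.IsPrime) {k : K} (hk : k ≠ 0) :
    k ∈ locAt D K P hP ∨ k⁻¹ ∈ locAt D K P hP := by
  obtain ⟨a, b, hb, hab⟩ := IsFractionRing.div_surjective (A := D) k
  have hb0 : algebraMap D K b ≠ 0 := aM_ne_zero (nonZeroDivisors.ne_zero hb)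
  have ha0 : algebraMap D K a ≠ 0 := by
    intro h; rw [h, zero_div] at hab; exact hk hab.symm
  obtain ⟨z, hz⟩ := hPruf P hP ⟨algebraMap D K a, Subalgebra.algebraMap_mem _ a⟩
      ⟨algebraMap D K b, Subalgebra.algebraMap_mem _ b⟩
  rcases hz with h | h
  · right
    have h' : algebraMap D K a * (z : K) = algebraMap D K b := congrArg Subtype.val h
    have : k⁻¹ = (z : K) := by
      rw [← hab, inv_div, eq_comm, eq_div_iff ha0, mul_comm]
      exact h'
    rw [this]; exact z.2
  · left
    have h' : algebraMap D K b * (z : K) = algebraMap D K a := congrArg Subtype.val h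
    have : k = (z : K) := by
      rw [← hab, eq_comm, eq_div_iff hb0, mul_comm]
      exact h'
    rw [this]; exact z.2

lemma primes_comparable (hPruf : IsPrufer D K) {N P Q : Ideal D}
    (hN : N.IsPrime) (hP : P.IsPrime) (hQ : Q.IsPrime) (hPN : P ≤ N) (hQN : Q ≤ N) :
    P ≤ Q ∨ Q ≤ P := by
  by_cases hPQ : P ≤ Q
  · exact Or.inl hPQ
  right
  obtain ⟨u, huP, huQ⟩ := SetLike.not_le_iff_exists.mp hPQ
  intro q hq
  by_cases hq0 : q = 0
  · rw [hq0]; exact P.zero_mem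
  have hu0 : u ≠ 0 := fun h => huQ (h ▸ Q.zero_mem)
  have hu'0 : algebraMap D K u ≠ 0 := aM_ne_zero hu0
  have hq'0 : algebraMap D K q ≠ 0 := aM_ne_zero hq0
  rcases locAt_dichotomy hPruf hN (div_ne_zero hu'0 hq'0) with h | h
  · exfalso
    obtain ⟨a, s, hs, h⟩ := (mem_locAt_iff hN).mp h
    have heq : s * u = a * q := by
      apply aM_inj (K := K)
      rw [map_mul, map_mul]
      field_simp at h
      linear_combination h
    have hsu : s * u ∈ Q := heq ▸ Q.mul_mem_left a hq
    rcases hQ.mem_or_mem hsu with h1 | h1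
    · exact hs (hQN h1)
    · exact huQ h1
  · rw [inv_div] at h
    obtain ⟨a, s, hs, h⟩ := (mem_locAt_iff hN).mp h
    have heq : s * q = a * u := by
      apply aM_inj (K := K)
      rw [map_mul, map_mul]
      field_simp at h
      linear_combination h
    have hsq : s * q ∈ P := heq ▸ P.mul_mem_left a huP
    rcases hP.mem_or_mem hsq with h1 | h1
    · exact absurd (hPN h1) hs
    · exact h1

lemma Dependent.symm' {M N : Ideal D} (h : Dependent D M N) : Dependent D N M := by
  obtain ⟨P, h1, h2, h3, h4⟩ := h; exact ⟨P, h1, h2, h4, h3⟩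

lemma dependent_trans (hPruf : IsPrufer D K) {M N L : Ideal D} (hN : N.IsPrime)
    (h1 : Dependent D M N) (h2 : Dependent D N L) : Dependent D M L := by
  obtain ⟨P, hP, hP0, hPM, hPN⟩ := h1
  obtain ⟨Q, hQ, hQ0, hQN, hQL⟩ := h2
  rcases primes_comparable hPruf hN hP hQ hPN hQN with h | h
  · exact ⟨P, hP, hP0, hPM, le_trans h hQL⟩
  · exact ⟨Q, hQ, hQ0, le_trans h hPM, hQL⟩

lemma TOf_eq_of_dependent (hPruf : IsPrufer D K) {M M' : Ideal D}
    (hM : M.IsPrime) (hM' : M'.IsPrime) (h : Dependent D M M') :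
    TOf D K M = TOf D K M' := by
  unfold TOf
  congr 1
  ext A
  constructor
  · rintro ⟨N, hN, hdep, rfl⟩
    exact ⟨N, hN, dependent_trans hPruf hM (Dependent.symm' h) hdep, rfl⟩
  · rintro ⟨N, hN, hdep, rfl⟩
    exact ⟨N, hN, dependent_trans hPruf hM' h hdep, rfl⟩

lemma TOf_le_locAt {M : Ideal D} (hM : M.IsMaximal) (h0 : M ≠ ⊥) :
    TOf D K M ≤ locAt D K M hM.isPrime :=
  sInf_le ⟨M, hM, ⟨M, hM.isPrime, h0, le_rfl, le_rfl⟩, rfl⟩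

lemma top_mem_skOver : (⊤ : Subalgebra D K) ∈ SkOver D K :=
  ⟨∅, Set.empty_subset _, sInf_empty.symm⟩

lemma inf_mem_skOver {A B : Subalgebra D K} (hA : A ∈ SkOver D K) (hB : B ∈ SkOver D K) :
    A ⊓ B ∈ SkOver D K := by
  obtain ⟨S1, h1, rfl⟩ := hA; obtain ⟨S2, h2, rfl⟩ := hB
  exact ⟨S1 ∪ S2, Set.union_subset h1 h2, sInf_union.symm⟩

lemma skOver_finite (hsl : IsSemilocal D) : (SkOver D K).Finite := by
  have h1 : (stdDecomp D K).Finite := by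
    have hsub : stdDecomp D K ⊆ (fun M => TOf D K M) '' {I : Ideal D | I.IsMaximal} := by
      rintro T ⟨M, hM, rfl⟩; exact ⟨M, hM, rfl⟩
    exact (hsl.image _).subset hsub
  have h2 : {S : Set (Subalgebra D K) | S ⊆ stdDecomp D K}.Finite := h1.finite_subsets
  have hsub : SkOver D K ⊆ sInf '' {S | S ⊆ stdDecomp D K} := by
    rintro A ⟨S, hS, rfl⟩; exact ⟨S, hS, rfl⟩
  exact (h2.image _).subset hsub

lemma toSubmodule_mul_self (E : Subalgebra D K) :
    Subalgebra.toSubmodule E * Subalgebra.toSubmodule E ≤ Subalgebra.toSubmodule E :=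
  Submodule.mul_le.2 fun a ha b hb =>
    (Subalgebra.mem_toSubmodule E).mpr
      (mul_mem ((Subalgebra.mem_toSubmodule E).mp ha) ((Subalgebra.mem_toSubmodule E).mp hb))

end Auxiliary


section KeyLemma

open Submodule

variable {D : Type*} [CommRing D] [IsDomain D]
variable {K : Type*} [Field K] [Algebra D K] [IsFractionRing D K]

lemma key_lemma (hPruf : IsPrufer D K) (hsl : IsSemilocal D)
    {B : Subalgebra D K} (hB : B ∈ SkOver D K)
    {M : Ideal D} (hM : M.IsMaximal) {x : K} (hx : x ≠ 0)
    (hle : Subalgebra.toSubmodule B ≤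
      Submodule.span D {x} * Subalgebra.toSubmodule (TOf D K M)) :
    B ≤ TOf D K M := by
  classical
  by_cases hM0 : M = ⊥
  · intro k _
    unfold TOf
    refine Algebra.mem_sInf.mpr ?_
    rintro A ⟨N, hN, ⟨P, hP, hP0, hPM, hPN⟩, rfl⟩
    exact absurd (le_bot_iff.mp (hM0 ▸ hPM)) hP0
  obtain ⟨S, hSsub, hBeq⟩ := hB
  set V := locAt D K M hM.isPrime with hV
  have hTV : TOf D K M ≤ V := TOf_le_locAt hM hM0
  have hBxV : Subalgebra.toSubmodule B ≤ Submodule.span D {x} * Subalgebra.toSubmodule V :=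
    hle.trans (mul_le_mul_right (Subalgebra.toSubmodule.monotone hTV) _)
  set W : Submodule D K := Subalgebra.toSubmodule B * Subalgebra.toSubmodule V with hW
  have hBW : Subalgebra.toSubmodule B ≤ W := fun b hb => by
    simpa using Submodule.mul_mem_mul hb ((Subalgebra.mem_toSubmodule V).mpr (one_mem V))
  have hVW : Subalgebra.toSubmodule V ≤ W := fun v hv => by
    simpa using Submodule.mul_mem_mul ((Subalgebra.mem_toSubmodule B).mpr (one_mem B)) hv
  have hWW : ∀ u ∈ W, ∀ w ∈ W, u * w ∈ W := by
    have hWle : W * W ≤ W := by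
      rw [hW]
      have e : (Subalgebra.toSubmodule B * Subalgebra.toSubmodule V) *
          (Subalgebra.toSubmodule B * Subalgebra.toSubmodule V) =
          (Subalgebra.toSubmodule B * Subalgebra.toSubmodule B) *
          (Subalgebra.toSubmodule V * Subalgebra.toSubmodule V) := by
        ring
      rw [e]
      exact le_trans (mul_le_mul_right (toSubmodule_mul_self V) _)
        (mul_le_mul_left (toSubmodule_mul_self B) _)
    exact fun u hu w hw => hWle (Submodule.mul_mem_mul hu hw)
  have hWxV : W ≤ Submodule.span D {x} * Subalgebra.toSubmodule V := by
    rw [hW]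
    refine Submodule.mul_le.2 fun b hb v hv => ?_
    obtain ⟨z, hz, hzx⟩ := Submodule.mem_span_singleton_mul.mp (hBxV hb)
    refine Submodule.mem_span_singleton_mul.mpr ⟨z * v, ?_, ?_⟩
    · exact (Subalgebra.mem_toSubmodule V).mpr
        (mul_mem ((Subalgebra.mem_toSubmodule V).mp hz) ((Subalgebra.mem_toSubmodule V).mp hv))
    · rw [← mul_assoc, hzx]
  obtain ⟨m, hmM, hm0⟩ := (Submodule.ne_bot_iff M).mp hM0
  have hm'0 : algebraMap D K m ≠ 0 := aM_ne_zero hm0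
  have hmV : (algebraMap D K m)⁻¹ ∉ V := by
    intro h
    obtain ⟨a, s, hs, h⟩ := (mem_locAt_iff hM.isPrime).mp h
    have heq : s = a * m := by
      apply aM_inj (K := K)
      rw [map_mul]
      field_simp at h
      linear_combination h
    exact hs (heq ▸ M.mul_mem_left a hmM)
  set k0 := x * (algebraMap D K m)⁻¹ with hk0def
  have hk00 : k0 ≠ 0 := mul_ne_zero hx (inv_ne_zero hm'0)
  have hk0W : k0 ∉ W := by
    intro h
    obtain ⟨z, hz, hzx⟩ := Submodule.mem_span_singleton_mul.mp (hWxV h)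
    have : (algebraMap D K m)⁻¹ = z := mul_left_cancel₀ hx hzx.symm
    exact hmV (this ▸ (Subalgebra.mem_toSubmodule V).mp hz)
  -- the ideal of "non-units" of W
  set p : Ideal D :=
    { carrier := {a : D | algebraMap D K a = 0 ∨ (algebraMap D K a)⁻¹ ∉ W},
      zero_mem' := Or.inl (map_zero _),
      add_mem' := by
        rintro a b ha hb
        simp only [Set.mem_setOf_eq, map_add] at *
        rcases ha with ha0 | haW
        · rcases hb with hb0 | hbW
          · exact Or.inl (by rw [ha0, hb0, add_zero])
          · exact Or.inr (by rw [ha0, zero_add]; exact hbW)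
        rcases hb with hb0 | hbW
        · exact Or.inr (by rw [hb0, add_zero]; exact haW)
        have ha0 : algebraMap D K a ≠ 0 := fun h => haW (by rw [h, inv_zero]; exact W.zero_mem)
        have hb0 : algebraMap D K b ≠ 0 := fun h => hbW (by rw [h, inv_zero]; exact W.zero_mem)
        by_cases hab : algebraMap D K a + algebraMap D K b = 0
        · exact Or.inl hab
        right
        intro habW
        rcases locAt_dichotomy hPruf hM.isPrime (div_ne_zero ha0 hb0) with h | h
        · apply hbW
          have h1 : (algebraMap D K a + algebraMap D K b) / algebraMap D K b ∈ W := by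
            have e : (algebraMap D K a + algebraMap D K b) / algebraMap D K b
                = 1 + algebraMap D K a / algebraMap D K b := by field_simp; try ring
            rw [e]
            exact W.add_mem (hVW ((Subalgebra.mem_toSubmodule V).mpr (one_mem V)))
              (hVW ((Subalgebra.mem_toSubmodule V).mpr h))
          have e2 : (algebraMap D K b)⁻¹ = (algebraMap D K a + algebraMap D K b)⁻¹ *
              ((algebraMap D K a + algebraMap D K b) / algebraMap D K b) := by
            field_simp
          rw [e2]
          exact hWW _ habW _ h1
        · apply haW
          rw [inv_div] at h
          have h1 : (algebraMap D K a + algebraMap D K b) / algebraMap D K a ∈ W := by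
            have e : (algebraMap D K a + algebraMap D K b) / algebraMap D K a
                = 1 + algebraMap D K b / algebraMap D K a := by field_simp; try ring
            rw [e]
            exact W.add_mem (hVW ((Subalgebra.mem_toSubmodule V).mpr (one_mem V)))
              (hVW ((Subalgebra.mem_toSubmodule V).mpr h))
          have e2 : (algebraMap D K a)⁻¹ = (algebraMap D K a + algebraMap D K b)⁻¹ *
              ((algebraMap D K a + algebraMap D K b) / algebraMap D K a) := by
            field_simp
          rw [e2]
          exact hWW _ habW _ h1,
      smul_mem' := by
        intro c a ha
        simp only [Set.mem_setOf_eq, smul_eq_mul, map_mul] at *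
        rcases ha with ha0 | haW
        · exact Or.inl (by rw [ha0, mul_zero])
        by_cases hca : algebraMap D K c * algebraMap D K a = 0
        · exact Or.inl hca
        right
        intro h
        apply haW
        have hc0 : algebraMap D K c ≠ 0 := fun h0 => hca (by rw [h0, zero_mul])
        have ha0 : algebraMap D K a ≠ 0 := fun h0 => hca (by rw [h0, mul_zero])
        have e : (algebraMap D K a)⁻¹ = c • ((algebraMap D K c * algebraMap D K a)⁻¹) := by
          rw [Algebra.smul_def]
          field_simp
        rw [e]
        exact W.smul_mem c h } with hpdef
  have hmemp : ∀ a : D, a ∈ p ↔ (algebraMap D K a = 0 ∨ (algebraMap D K a)⁻¹ ∉ W) := fun a =>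
    Iff.rfl
  have hp_prime : p.IsPrime := by
    constructor
    · intro h
      have h1 : (1 : D) ∈ p := h ▸ Submodule.mem_top
      rcases (hmemp 1).mp h1 with h1 | h1
      · rw [map_one] at h1; exact one_ne_zero h1
      · rw [map_one, inv_one] at h1
        exact h1 (hBW ((Subalgebra.mem_toSubmodule B).mpr (one_mem B)))
    · intro a b hab
      rcases (hmemp _).mp hab with h0 | hWc
      · rw [map_mul, mul_eq_zero] at h0
        rcases h0 with h | h
        · exact Or.inl ((hmemp a).mpr (Or.inl h))
        · exact Or.inr ((hmemp b).mpr (Or.inl h))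
      · by_contra hcon
        push_neg at hcon
        obtain ⟨hna, hnb⟩ := hcon
        rw [hmemp, not_or, not_not] at hna hnb
        apply hWc
        rw [map_mul, mul_inv]
        exact hWW _ hna.2 _ hnb.2
  have hk0V : k0⁻¹ ∈ V := by
    rcases locAt_dichotomy hPruf hM.isPrime hk00 with h | h
    · exact absurd (hVW ((Subalgebra.mem_toSubmodule V).mpr h)) hk0W
    · exact h
  obtain ⟨a0, s0, hs0, hassoc⟩ := (mem_locAt_iff hM.isPrime).mp hk0V
  have hs0' : algebraMap D K s0 ≠ 0 := aM_ne_zero (fun h => hs0 (h ▸ M.zero_mem))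
  have ha0' : algebraMap D K a0 ≠ 0 := by
    intro h
    rw [h] at hassoc
    exact (mul_ne_zero hs0' (inv_ne_zero hk00)) hassoc
  have hap : a0 ∈ p := by
    refine (hmemp a0).mpr (Or.inr ?_)
    intro haW
    have e : k0 = s0 • (algebraMap D K a0)⁻¹ := by
      rw [Algebra.smul_def, eq_comm, mul_inv_eq_iff_eq_mul₀ ha0']
      field_simp at hassoc
      linear_combination hassoc
    rw [e] at hk0W
    exact hk0W (W.smul_mem s0 haW)
  have hpbot : p ≠ ⊥ := by
    intro h
    rw [h] at hap
    exact ha0' (by rw [Ideal.mem_bot.mp hap, map_zero])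
  have hpM : p ≤ M := by
    intro a hamem
    by_contra haM
    rcases (hmemp a).mp hamem with h0 | hWc
    · have ha00 : a = 0 := aM_inj (K := K) (by rw [h0, map_zero])
      exact haM (ha00 ▸ M.zero_mem)
    · exact hWc (hVW ((Subalgebra.mem_toSubmodule V).mpr (inv_mem_locAt hM.isPrime haM)))
  set G : Set (Ideal D) :=
    {N | N.IsMaximal ∧ ∃ M' : Ideal D, M'.IsMaximal ∧ TOf D K M' ∈ S ∧ Dependent D M' N}
    with hGdef
  have hmemB : ∀ k : K, (∀ N ∈ G, ∀ hN : N.IsPrime, k ∈ locAt D K N hN) → k ∈ B := by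
    intro k hk
    rw [hBeq]
    refine Algebra.mem_sInf.mpr fun T hT => ?_
    obtain ⟨M', hM', rfl⟩ := hSsub hT
    show k ∈ TOf D K M'
    unfold TOf
    refine Algebra.mem_sInf.mpr ?_
    rintro A ⟨N, hN, hdep, rfl⟩
    exact hk N ⟨hN, M', hM', hT, hdep⟩ hN.isPrime
  have hGN : ∃ N ∈ G, p ≤ N := by
    by_contra hcon
    push_neg at hcon
    by_cases hGne : G.Nonempty
    · obtain ⟨N0, hN0⟩ := hGne
      have hGfin : G.Finite := hsl.subset fun N hN => hN.1
      have hiff := Ideal.subset_union_prime (s := hGfin.toFinset) (f := id) N0 N0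
          (fun i hi _ _ => ((hGfin.mem_toFinset.mp hi).1.isPrime)) (I := p)
      have hnsub : ¬ ((p : Set D) ⊆ ⋃ i ∈ hGfin.toFinset, ((id i : Ideal D) : Set D)) := by
        intro h
        obtain ⟨N, hN, hpN⟩ := hiff.mp h
        exact hcon N (hGfin.mem_toFinset.mp hN) hpN
      obtain ⟨c, hcp, hcU⟩ := Set.not_subset.mp hnsub
      have hcN : ∀ N ∈ G, c ∉ N := by
        intro N hN hc
        exact hcU (Set.mem_biUnion (hGfin.mem_toFinset.mpr hN) hc)
      have hc0 : c ≠ 0 := fun h => hcN N0 hN0 (h ▸ N0.zero_mem)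
      have hcB : (algebraMap D K c)⁻¹ ∈ B :=
        hmemB _ (fun N hN hNp => inv_mem_locAt hNp (hcN N hN))
      rcases (hmemp c).mp hcp with h0 | hWc
      · exact hc0 (aM_inj (K := K) (by rw [h0, map_zero]))
      · exact hWc (hBW ((Subalgebra.mem_toSubmodule B).mpr hcB))
    · have hk0B : k0 ∈ B := hmemB k0 (fun N hN _ => absurd ⟨N, hN⟩ hGne)
      exact hk0W (hBW ((Subalgebra.mem_toSubmodule B).mpr hk0B))
  obtain ⟨N, ⟨hNmax, M', hM'max, hTS, hdepM'N⟩, hpN⟩ := hGN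
  have hdepMN : Dependent D M N := ⟨p, hp_prime, hpbot, hpM, hpN⟩
  have hdepM'M : Dependent D M' M :=
    dependent_trans hPruf hNmax.isPrime hdepM'N (Dependent.symm' hdepMN)
  calc B = sInf S := hBeq
    _ ≤ TOf D K M' := sInf_le hTS
    _ = TOf D K M := TOf_eq_of_dependent hPruf hM'max.isPrime hM.isPrime hdepM'M

end KeyLemma


section Construction

open Submodule

variable {D : Type*} [CommRing D] [IsDomain D]
variable {K : Type*} [Field K] [Algebra D K] [IsFractionRing D K]

lemma span_smul_smul (x y : K) (M : Submodule D K) :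
    Submodule.span D {x} * (Submodule.span D {y} * M) = Submodule.span D {x * y} * M := by
  rw [← mul_assoc, Submodule.span_mul_span, Set.singleton_mul_singleton]

lemma span_one_mul (M : Submodule D K) : Submodule.span D {(1 : K)} * M = M := by
  rw [← Submodule.one_eq_span, one_mul]

lemma span_inv_cancel {x : K} (hx : x ≠ 0) (M : Submodule D K) :
    Submodule.span D {x⁻¹} * (Submodule.span D {x} * M) = M := by
  rw [span_smul_smul, inv_mul_cancel₀ hx, span_one_mul]

lemma span_inv_cancel' {x : K} (hx : x ≠ 0) (M : Submodule D K) :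
    Submodule.span D {x} * (Submodule.span D {x⁻¹} * M) = M := by
  rw [span_smul_smul, mul_inv_cancel₀ hx, span_one_mul]

lemma le_span_iff {x : K} (hx : x ≠ 0) {I J : Submodule D K} :
    Submodule.span D {x} * I ≤ J ↔ I ≤ Submodule.span D {x⁻¹} * J := by
  constructor
  · intro h
    conv_lhs => rw [← span_inv_cancel hx I]
    exact mul_le_mul_right h _
  · intro h
    have h2 := mul_le_mul_right h (Submodule.span D {x})
    rwa [span_inv_cancel' hx] at h2

lemma span_mul_sInf {x : K} (hx : x ≠ 0) (F : Set (Submodule D K)) :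
    Submodule.span D {x} * sInf F = sInf ((fun J => Submodule.span D {x} * J) '' F) := by
  ext k
  constructor
  · intro hk
    obtain ⟨z, hz, rfl⟩ := Submodule.mem_span_singleton_mul.mp hk
    refine Submodule.mem_sInf.mpr ?_
    rintro J' ⟨J, hJ, rfl⟩
    exact Submodule.mem_span_singleton_mul.mpr ⟨z, Submodule.mem_sInf.mp hz J hJ, rfl⟩
  · intro hk
    refine Submodule.mem_span_singleton_mul.mpr
      ⟨x⁻¹ * k, Submodule.mem_sInf.mpr fun J hJ => ?_, by field_simp⟩
    obtain ⟨w, hw, hwx⟩ :=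
      Submodule.mem_span_singleton_mul.mp (Submodule.mem_sInf.mp hk _ ⟨J, hJ, rfl⟩)
    have e : x⁻¹ * k = w := by rw [← hwx]; field_simp
    rw [e]; exact hw

variable (D K) in
/-- The family of closed modules used to build the semistar operation. -/
def closedFam (Δ : Set (Subalgebra D K)) : Set (Submodule D K) :=
  {J | ∃ A ∈ Δ, ∃ x : K, x ≠ 0 ∧ J = Submodule.span D {x} * Subalgebra.toSubmodule A}

lemma closedFam_shift (Δ : Set (Subalgebra D K)) {x : K} (hx : x ≠ 0) (I : Submodule D K) :
    {J | J ∈ closedFam D K Δ ∧ Submodule.span D {x} * I ≤ J}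
      = (fun J => Submodule.span D {x} * J) '' {J | J ∈ closedFam D K Δ ∧ I ≤ J} := by
  ext J
  constructor
  · rintro ⟨⟨A, hA, y, hy, rfl⟩, hle⟩
    refine ⟨Submodule.span D {x⁻¹} * (Submodule.span D {y} * Subalgebra.toSubmodule A),
      ⟨?_, ?_⟩, ?_⟩
    · exact ⟨A, hA, x⁻¹ * y, mul_ne_zero (inv_ne_zero hx) hy, span_smul_smul _ _ _⟩
    · exact (le_span_iff hx).mp hle
    · exact span_inv_cancel' hx _
  · rintro ⟨J, ⟨hJF, hIJ⟩, rfl⟩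
    refine ⟨?_, mul_le_mul_right hIJ _⟩
    obtain ⟨A, hA, y, hy, rfl⟩ := hJF
    exact ⟨A, hA, x * y, mul_ne_zero hx hy, span_smul_smul _ _ _⟩

variable (D K) in
/-- The semistar operation associated with a family `Δ` of overrings. -/
def starOf (Δ : Set (Subalgebra D K)) : Semistar D K where
  toFun I := sInf {J | J ∈ closedFam D K Δ ∧ I ≤ J}
  le_star' I := le_sInf fun _ hJ => hJ.2
  mono' I I' h := by
    apply sInf_le_sInf
    rintro J ⟨h1, h2⟩
    exact ⟨h1, h.trans h2⟩
  idem' I := by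
    apply le_antisymm
    · apply sInf_le_sInf
      rintro J ⟨h1, h2⟩
      refine ⟨h1, sInf_le ?_⟩
      exact ⟨h1, h2⟩
    · apply sInf_le_sInf
      rintro J ⟨h1, h2⟩
      refine ⟨h1, le_trans (le_sInf fun J' hJ' => hJ'.2) h2⟩
  smul' x hx I := by
    show sInf {J | J ∈ closedFam D K Δ ∧ Submodule.span D {x} * I ≤ J}
        = Submodule.span D {x} * sInf {J | J ∈ closedFam D K Δ ∧ I ≤ J}
    rw [closedFam_shift Δ hx I, ← span_mul_sInf hx]

lemma cond1_general (s : Semistar D K) (E : Subalgebra D K) :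
    ∀ a ∈ E, ∀ y ∈ s.toFun (Subalgebra.toSubmodule E),
      a * y ∈ s.toFun (Subalgebra.toSubmodule E) := by
  intro a ha y hy
  by_cases ha0 : a = 0
  · rw [ha0, zero_mul]; exact Submodule.zero_mem _
  have hle : Submodule.span D {a} * Subalgebra.toSubmodule E ≤ Subalgebra.toSubmodule E := by
    refine Submodule.mul_le.2 fun u hu v hv => ?_
    obtain ⟨c, rfl⟩ := Submodule.mem_span_singleton.mp hu
    rw [smul_mul_assoc]
    exact Submodule.smul_mem _ c ((Subalgebra.mem_toSubmodule E).mpr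
      (mul_mem ha ((Subalgebra.mem_toSubmodule E).mp hv)))
  have h1 : a * y ∈ Submodule.span D {a} * s.toFun (Subalgebra.toSubmodule E) :=
    Submodule.mul_mem_mul (Submodule.mem_span_singleton_self a) hy
  rw [← s.smul' a ha0] at h1
  exact s.mono' hle h1

lemma frac_numerator {A : Subalgebra D K} {I : Submodule D K}
    (h : ∃ d : K, d ≠ 0 ∧ ∀ y ∈ I, d * y ∈ A) :
    ∃ a : D, algebraMap D K a ≠ 0 ∧ ∀ y ∈ I, algebraMap D K a * y ∈ A := by
  obtain ⟨d, hd0, hd⟩ := h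
  obtain ⟨a, b, hb, hab⟩ := IsFractionRing.div_surjective (A := D) d
  have hb0 : algebraMap D K b ≠ 0 := aM_ne_zero (nonZeroDivisors.ne_zero hb)
  have ha0 : algebraMap D K a ≠ 0 := by
    intro h0; rw [h0, zero_div] at hab; exact hd0 hab.symm
  refine ⟨a, ha0, fun y hy => ?_⟩
  have e : algebraMap D K a * y = algebraMap D K b * (d * y) := by
    rw [← hab]; field_simp
  rw [e]
  exact mul_mem (Subalgebra.algebraMap_mem A b) (hd y hy)

lemma sInf_mem_closed {Δ : Set (Subalgebra D K)} (hfin : Δ.Finite)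
    (htop : (⊤ : Subalgebra D K) ∈ Δ) (hcl : ∀ A ∈ Δ, ∀ B ∈ Δ, A ⊓ B ∈ Δ) :
    ∀ T : Set (Subalgebra D K), T ⊆ Δ → sInf T ∈ Δ := by
  intro T hsub
  have hfin' : T.Finite := hfin.subset hsub
  refine Set.Finite.induction_on (motive := fun s _ => s ⊆ Δ → sInf s ∈ Δ) T hfin'
    (fun _ => by rw [sInf_empty]; exact htop)
    (fun {a s} _ _ ih h => by
      rw [sInf_insert]
      exact hcl a (h (Set.mem_insert a s)) _ (ih fun y hy => h (Set.mem_insert_of_mem a hy)))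
    hsub

end Construction


/-- A subset `Δ` of the skeleton is the support of some semistar
operation if and only if it contains `K` and is closed under intersections. -/
theorem statement5
    (D : Type*) [CommRing D] [IsDomain D]
    (K : Type*) [Field K] [Algebra D K] [IsFractionRing D K]
    (hPruf : IsPrufer D K) (hsl : IsSemilocal D)
    (Δ : Set (Subalgebra D K)) (hΔ : Δ ⊆ SkOver D K) :
    (∃ s : Semistar D K, supp D K s = Δ) ↔
      ((⊤ : Subalgebra D K) ∈ Δ ∧ ∀ A ∈ Δ, ∀ B ∈ Δ, A ⊓ B ∈ Δ) := by
  constructor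
  · rintro ⟨s, rfl⟩
    constructor
    · -- `K` belongs to the support
      have htop : s.toFun (Subalgebra.toSubmodule (⊤ : Subalgebra D K)) = ⊤ :=
        top_unique (le_trans (le_of_eq Algebra.top_toSubmodule.symm) (s.le_star' _))
      refine ⟨top_mem_skOver, ?_, 1, one_ne_zero, fun y _ => Algebra.mem_top⟩
      intro a _ y _
      rw [htop]
      exact Submodule.mem_top
    · -- the support is closed under intersections
      rintro A ⟨hAsk, _, hAfr⟩ B ⟨hBsk, _, hBfr⟩
      refine ⟨inf_mem_skOver hAsk hBsk, cond1_general s (A ⊓ B), ?_⟩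
      obtain ⟨a1, ha1, hA1⟩ := frac_numerator hAfr
      obtain ⟨a2, ha2, hB1⟩ := frac_numerator hBfr
      have hmono1 : s.toFun (Subalgebra.toSubmodule (A ⊓ B)) ≤
          s.toFun (Subalgebra.toSubmodule A) :=
        s.mono' (Subalgebra.toSubmodule.monotone inf_le_left)
      have hmono2 : s.toFun (Subalgebra.toSubmodule (A ⊓ B)) ≤
          s.toFun (Subalgebra.toSubmodule B) :=
        s.mono' (Subalgebra.toSubmodule.monotone inf_le_right)
      refine ⟨algebraMap D K a1 * algebraMap D K a2, mul_ne_zero ha1 ha2, fun y hy => ?_⟩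
      rw [Algebra.mem_inf]
      constructor
      · have e : algebraMap D K a1 * algebraMap D K a2 * y
            = algebraMap D K a2 * (algebraMap D K a1 * y) := by ring
        rw [e]
        exact mul_mem (Subalgebra.algebraMap_mem A a2) (hA1 y (hmono1 hy))
      · have e : algebraMap D K a1 * algebraMap D K a2 * y
            = algebraMap D K a1 * (algebraMap D K a2 * y) := by ring
        rw [e]
        exact mul_mem (Subalgebra.algebraMap_mem B a1) (hB1 y (hmono2 hy))
  · rintro ⟨htop, hcl⟩
    have hfin : Δ.Finite := (skOver_finite hsl).subset hΔ
    refine ⟨starOf D K Δ, Set.Subset.antisymm ?_ ?_⟩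
    · -- supp (starOf Δ) ⊆ Δ
      rintro B ⟨hBsk, _, hBfr⟩
      set C := sInf {A | A ∈ Δ ∧ B ≤ A} with hC
      have hCΔ : C ∈ Δ := sInf_mem_closed hfin htop hcl _ fun A hA => hA.1
      have hBC : B ≤ C := le_sInf fun A hA => hA.2
      have hlow : Subalgebra.toSubmodule C ≤
          (starOf D K Δ).toFun (Subalgebra.toSubmodule B) := by
        refine le_sInf ?_
        rintro J ⟨⟨A, hAΔ, x, hx0, rfl⟩, hBJ⟩
        have hBA : B ≤ A := by
          obtain ⟨SA, hSA, hAeq⟩ := hΔ hAΔ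
          rw [hAeq]
          refine le_sInf fun T hT => ?_
          obtain ⟨MT, hMT, rfl⟩ := hSA hT
          refine key_lemma hPruf hsl hBsk hMT hx0 (hBJ.trans ?_)
          refine mul_le_mul_right (Subalgebra.toSubmodule.monotone ?_) _
          rw [hAeq]
          exact sInf_le hT
        have hCA : C ≤ A := sInf_le ⟨hAΔ, hBA⟩
        have hxA : Subalgebra.toSubmodule A ≤
            Submodule.span D {x} * Subalgebra.toSubmodule A := by
          have h1 : (1 : K) ∈ Submodule.span D {x} * Subalgebra.toSubmodule A :=
            hBJ ((Subalgebra.mem_toSubmodule B).mpr (one_mem B))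
          obtain ⟨z, hz, hzx⟩ := Submodule.mem_span_singleton_mul.mp h1
          intro a ha
          refine Submodule.mem_span_singleton_mul.mpr
            ⟨z * a, (Subalgebra.mem_toSubmodule A).mpr
              (mul_mem ((Subalgebra.mem_toSubmodule A).mp hz)
                ((Subalgebra.mem_toSubmodule A).mp ha)), ?_⟩
          rw [← mul_assoc, hzx, one_mul]
        exact (Subalgebra.toSubmodule.monotone hCA).trans hxA
      have hCB : C ≤ B := by
        obtain ⟨d, hd0, hdB⟩ := hBfr
        obtain ⟨SB, hSB, hBeq⟩ := hBsk
        rw [hBeq]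
        refine le_sInf fun T hT => ?_
        obtain ⟨MT, hMT, rfl⟩ := hSB hT
        refine key_lemma hPruf hsl (hΔ hCΔ) hMT (inv_ne_zero hd0) ?_
        intro c hc
        have hcB : d * c ∈ B := hdB c (hlow hc)
        have hcT : d * c ∈ TOf D K MT := by
          have : d * c ∈ sInf SB := hBeq ▸ hcB
          exact Algebra.mem_sInf.mp this _ hT
        refine Submodule.mem_span_singleton_mul.mpr
          ⟨d * c, (Subalgebra.mem_toSubmodule _).mpr hcT, ?_⟩
        field_simp
      have hBCeq : B = C := le_antisymm hBC hCB
      rw [hBCeq]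
      exact hCΔ
    · -- Δ ⊆ supp (starOf Δ)
      intro A hA
      have hstar : (starOf D K Δ).toFun (Subalgebra.toSubmodule A) =
          Subalgebra.toSubmodule A := by
        apply le_antisymm
        · exact sInf_le ⟨⟨A, hA, 1, one_ne_zero, (span_one_mul _).symm⟩, le_rfl⟩
        · exact le_sInf fun J hJ => hJ.2
      refine ⟨hΔ hA, ?_, 1, one_ne_zero, fun y hy => ?_⟩
      · intro a ha y hy
        rw [hstar] at hy ⊢
        exact (Subalgebra.mem_toSubmodule A).mpr
          (mul_mem ha ((Subalgebra.mem_toSubmodule A).mp hy))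
      · rw [hstar] at hy
        rw [one_mul]
        exact (Subalgebra.mem_toSubmodule A).mp hy


end Paper
end
end
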